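/- Every element of PSL(2,ℂ) is a commutator: for every g in PSL(2,ℂ) there exist elements x and y of PSL(2,ℂ) such that g = x·y·x⁻¹·y⁻¹. -/

import Mathlib

set_option linter.unreachableTactic false
set_option linter.unusedTactic false

/-- `PSL(2,ℂ)`: the quotient of `SL(2,ℂ)` by its center `{I, -I}`. -/
abbrev PSL2C :=
  Matrix.SpecialLinearGroup (Fin 2) ℂ ⧸
    Subgroup.center (Matrix.SpecialLinearGroup (Fin 2) ℂ)

abbrev SL2C := Matrix.SpecialLinearGroup (Fin 2) ℂ

noncomputable section

/-- Build an element of `SL(2,ℂ)` from four entries with determinant one. -/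
def mkSL (a b c d : ℂ) (h : a * d - b * c = 1) : SL2C :=
  ⟨!![a, b; c, d], by rw [Matrix.det_fin_two_of]; exact h⟩

/-- `-I` as an element of `SL(2,ℂ)`. -/
def negI : SL2C := mkSL (-1) 0 0 (-1) (by ring)

lemma negI_mem : negI ∈ Subgroup.center SL2C := by
  rw [Subgroup.mem_center_iff]
  intro g
  apply Subtype.ext
  simp only [Matrix.SpecialLinearGroup.coe_mul]
  simp only [Matrix.SpecialLinearGroup.coe_mul, negI, mkSL]
  ext i j
  fin_cases i <;> fin_cases j <;>
    simp [Matrix.mul_apply, Fin.sum_univ_two] <;> ring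

lemma negI_mkSL (a b c d : ℂ) (h : a * d - b * c = 1)
    (h' : -a * -d - -b * -c = 1) :
    negI * mkSL a b c d h = mkSL (-a) (-b) (-c) (-d) h' := by
  apply Subtype.ext
  simp only [Matrix.SpecialLinearGroup.coe_mul]
  simp only [Matrix.SpecialLinearGroup.coe_mul, negI, mkSL]
  ext i j
  fin_cases i <;> fin_cases j <;>
    simp [Matrix.mul_apply, Fin.sum_univ_two] <;> ring

/-- Diagonal elements of `SL(2,ℂ)` are commutators. -/
lemma diag_case (a d : ℂ) (h : a * d - 0 * 0 = 1) :
    ∃ X Y : SL2C, mkSL a 0 0 d h * Y * X = X * Y := by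
  have had : a * d = 1 := by linear_combination h
  have ha : a ≠ 0 := fun h0 => by simp [h0] at had
  obtain ⟨μ, hμ⟩ := IsAlgClosed.exists_pow_nat_eq a (n := 2) (by norm_num)
  have hμ0 : μ ≠ 0 := fun h0 => ha (by rw [← hμ, h0]; ring)
  refine ⟨mkSL μ 0 0 μ⁻¹ (by field_simp; norm_num), mkSL 0 (-1) 1 0 (by ring), ?_⟩
  apply Subtype.ext
  simp only [Matrix.SpecialLinearGroup.coe_mul]
  simp only [Matrix.SpecialLinearGroup.coe_mul, mkSL]
  ext i j
  fin_cases i <;> fin_cases j <;>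
    simp [Matrix.mul_apply, Fin.sum_univ_two] <;>
    field_simp <;> first
      | linear_combination -hμ
      | linear_combination d * hμ + had

/-- Companion matrices of trace `t ∉ {1, 2}` are commutators in `SL(2,ℂ)`. -/
lemma companion_case (t : ℂ) (h1 : t ≠ 1) (h2 : t ≠ 2)
    (h : 0 * t - (-1) * 1 = 1) :
    ∃ X Y : SL2C, mkSL 0 (-1) 1 t h * Y * X = X * Y := by
  have h1' : t - 1 ≠ 0 := sub_ne_zero.mpr h1
  have h2' : t - 2 ≠ 0 := sub_ne_zero.mpr h2
  obtain ⟨μ, hμ⟩ := IsAlgClosed.exists_pow_nat_eq (t - 1)⁻¹ (n := 2) (by norm_num)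
  have hμ' : μ ^ 2 * (t - 1) = 1 := by rw [hμ]; field_simp
  have hμ0 : μ ≠ 0 := by
    intro h0; rw [h0] at hμ'; simp at hμ'
  refine ⟨mkSL μ 0 0 μ⁻¹ (by field_simp; norm_num),
    mkSL ((t-1)/(t-2)) 1 (-((t-1)/(t-2))) (-(t-1)⁻¹) (by field_simp; ring), ?_⟩
  apply Subtype.ext
  simp only [Matrix.SpecialLinearGroup.coe_mul]
  simp only [Matrix.SpecialLinearGroup.coe_mul, mkSL]
  ext i j
  fin_cases i <;> fin_cases j <;>
    simp [Matrix.mul_apply, Fin.sum_univ_two]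
  all_goals field_simp
  all_goals ring_nf
  all_goals first
    | linear_combination -2 * hμ'
    | linear_combination (-(t^2 - 3*t + 3)) * hμ'
    | linear_combination hμ'
    | linear_combination ((t-1)*(t-2)) * hμ'
    | linear_combination -hμ'
    | linear_combination (-(t-1)*(t-2)) * hμ'

/-- Transfer a commutator relation (up to a central element) through conjugation. -/
lemma conj_transfer (A B Q X Y s : SL2C) (hs : s ∈ Subgroup.center SL2C)
    (hq : A * Q = Q * B) (h : B * Y * X = s * (X * Y)) :
    A * (Q * Y * Q⁻¹) * (Q * X * Q⁻¹) = s * ((Q * X * Q⁻¹) * (Q * Y * Q⁻¹)) := by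
  have hA : A = Q * B * Q⁻¹ := by rw [← hq]; group
  have hcQ : Q * s = s * Q := Subgroup.mem_center_iff.mp hs Q
  calc A * (Q * Y * Q⁻¹) * (Q * X * Q⁻¹)
      = Q * (B * Y * X) * Q⁻¹ := by rw [hA]; group
    _ = Q * s * ((X * Y) * Q⁻¹) := by rw [h]; group
    _ = s * (Q * (X * Y) * Q⁻¹) := by rw [hcQ]; group
    _ = s * ((Q * X * Q⁻¹) * (Q * Y * Q⁻¹)) := by group

/-- Conjugating an element of `SL(2,ℂ)` with nonzero lower-left entry
into companion form. -/
lemma to_companion (a b c d : ℂ) (h : a * d - b * c = 1) (hc : c ≠ 0) :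
    ∃ Q : SL2C, mkSL a b c d h * Q =
      Q * mkSL 0 (-1) 1 (a + d) (by ring) := by
  obtain ⟨z, hz⟩ := IsAlgClosed.exists_pow_nat_eq c (n := 2) (by norm_num)
  have hz0 : z ≠ 0 := fun h0 => hc (by rw [← hz, h0]; ring)
  refine ⟨mkSL z⁻¹ (a * z⁻¹) 0 (c * z⁻¹)
    (by field_simp; first
      | linear_combination hz
      | linear_combination -hz
      | linear_combination -2 * hz
      | linear_combination 2 * hz), ?_⟩
  apply Subtype.ext
  simp only [Matrix.SpecialLinearGroup.coe_mul]
  simp only [Matrix.SpecialLinearGroup.coe_mul, mkSL]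
  ext i j
  fin_cases i <;> fin_cases j <;>
    simp [Matrix.mul_apply, Fin.sum_univ_two]
  all_goals field_simp
  all_goals ring_nf
  all_goals first
    | linear_combination h
    | linear_combination -h
    | linear_combination -2 * h
    | linear_combination 2 * h
    | linear_combination -3 * h
    | linear_combination 3 * h

/-- An element with nonzero lower-left entry and good trace is a commutator. -/
lemma cne_good (a b c d : ℂ) (h : a * d - b * c = 1) (hc : c ≠ 0)
    (h1 : a + d ≠ 1) (h2 : a + d ≠ 2) :
    ∃ X Y : SL2C, mkSL a b c d h * Y * X = X * Y := by
  obtain ⟨X0, Y0, h0⟩ := companion_case (a + d) h1 h2 (by ring)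
  obtain ⟨Q, hq⟩ := to_companion a b c d h hc
  refine ⟨Q * X0 * Q⁻¹, Q * Y0 * Q⁻¹, ?_⟩
  have := conj_transfer (mkSL a b c d h) (mkSL 0 (-1) 1 (a + d) (by ring)) Q X0 Y0 1
    (Subgroup.one_mem _) hq (by rw [one_mul]; exact h0)
  rw [one_mul] at this
  exact this

/-- An element with nonzero lower-left entry is a commutator up to center. -/
lemma cne (a b c d : ℂ) (h : a * d - b * c = 1) (hc : c ≠ 0) :
    ∃ X Y s : SL2C, s ∈ Subgroup.center SL2C ∧
      mkSL a b c d h * Y * X = s * (X * Y) := by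
  by_cases ht : a + d = 1 ∨ a + d = 2
  · -- pass to the negative, which has good trace
    have h' : -a * -d - -b * -c = 1 := by linear_combination h
    have hc' : (-c : ℂ) ≠ 0 := neg_ne_zero.mpr hc
    have hn1 : -a + -d ≠ 1 := by
      rcases ht with e | e <;>
        · have : -a + -d = -(a + d) := by ring
          rw [this, e]; norm_num
    have hn2 : -a + -d ≠ 2 := by
      rcases ht with e | e <;>
        · have : -a + -d = -(a + d) := by ring
          rw [this, e]; norm_num
    obtain ⟨X, Y, hE⟩ := cne_good (-a) (-b) (-c) (-d) h' hc' hn1 hn2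
    refine ⟨X, Y, negI⁻¹, Subgroup.inv_mem _ negI_mem, ?_⟩
    have key : negI * (mkSL a b c d h * Y * X) = X * Y := by
      rw [← mul_assoc, ← mul_assoc, negI_mkSL a b c d h h']
      exact hE
    rw [← key]; group
  · push_neg at ht
    obtain ⟨X, Y, hE⟩ := cne_good a b c d h hc ht.1 ht.2
    exact ⟨X, Y, 1, Subgroup.one_mem _, by rw [one_mul]; exact hE⟩

/-- Every element of `SL(2,ℂ)` is a commutator up to a central element. -/
lemma main_sl (A : SL2C) : ∃ X Y s : SL2C, s ∈ Subgroup.center SL2C ∧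
    A * Y * X = s * (X * Y) := by
  obtain ⟨a, b, c, d, h, rfl⟩ :
      ∃ a b c d h, A = mkSL a b c d h := by
    refine ⟨A.1 0 0, A.1 0 1, A.1 1 0, A.1 1 1, ?_, ?_⟩
    · have := A.2
      rwa [Matrix.det_fin_two] at this
    · apply Subtype.ext
      exact Matrix.eta_fin_two A.1
  by_cases hc : c = 0
  · subst hc
    by_cases hb : b = 0
    · subst hb
      obtain ⟨X, Y, hE⟩ := diag_case a d h
      exact ⟨X, Y, 1, Subgroup.one_mem _, by rw [one_mul]; exact hE⟩
    · -- conjugate by the Weyl element to move `b` to the lower left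
      have h' : d * a - 0 * (-b) = 1 := by linear_combination h
      have hq : mkSL a b 0 d h * mkSL 0 1 (-1) 0 (by ring) =
          mkSL 0 1 (-1) 0 (by ring) * mkSL d 0 (-b) a h' := by
        apply Subtype.ext
        simp only [Matrix.SpecialLinearGroup.coe_mul]
        simp only [Matrix.SpecialLinearGroup.coe_mul, mkSL]
        ext i j
        fin_cases i <;> fin_cases j <;>
          simp [Matrix.mul_apply, Fin.sum_univ_two]
      obtain ⟨X, Y, s, hs, hE⟩ := cne d 0 (-b) a h' (neg_ne_zero.mpr hb)
      exact ⟨mkSL 0 1 (-1) 0 (by ring) * X * (mkSL 0 1 (-1) 0 (by ring))⁻¹,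
        mkSL 0 1 (-1) 0 (by ring) * Y * (mkSL 0 1 (-1) 0 (by ring))⁻¹, s, hs,
        conj_transfer _ _ _ _ _ _ hs hq hE⟩
  · exact cne a b c d h hc

end

/-- Every element of `PSL(2,ℂ)` is a commutator. -/
theorem stmt_6 (g : PSL2C) : ∃ x y : PSL2C, g = x * y * x⁻¹ * y⁻¹ := by
  obtain ⟨A, rfl⟩ := QuotientGroup.mk'_surjective (Subgroup.center SL2C) g
  obtain ⟨X, Y, s, hs, hE⟩ := main_sl A
  refine ⟨QuotientGroup.mk' _ X, QuotientGroup.mk' _ Y, ?_⟩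
  have hA : A = s * (X * Y * X⁻¹ * Y⁻¹) := by
    calc A = A * Y * X * X⁻¹ * Y⁻¹ := by group
      _ = s * (X * Y) * X⁻¹ * Y⁻¹ := by rw [hE]
      _ = s * (X * Y * X⁻¹ * Y⁻¹) := by group
  have h1 : (QuotientGroup.mk' (Subgroup.center SL2C)) s = 1 :=
    (QuotientGroup.eq_one_iff s).mpr hs
  rw [hA, map_mul, h1, one_mul, map_mul, map_mul, map_inv, map_inv, map_mul]
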